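/- The abelian Lie subalgebra H_n = ⊕_{i=1}^n K·(x_i ∂_i) of D_n = Der_K(P_n) equals its own centralizer in D_n; in particular H_n is a maximal abelian Lie subalgebra of D_n. -/

import Mathlib

open MvPolynomial

lemma key_coeff {n : ℕ} {K : Type*} [CommRing K] (i : Fin n) (p : MvPolynomial (Fin n) K)
    (m : Fin n →₀ ℕ) :
    coeff m ((X i : MvPolynomial (Fin n) K) * pderiv i p) = (m i : K) * coeff m p := by
  induction p using MvPolynomial.induction_on' with
  | add p q hp hq => simp [mul_add, hp, hq]
  | monomial s a =>
    rw [pderiv_monomial]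
    rw [show (X i : MvPolynomial (Fin n) K) = monomial (Finsupp.single i 1) 1 from rfl,
      monomial_mul, one_mul, coeff_monomial, coeff_monomial]
    by_cases hs : s i = 0
    · simp only [hs, Nat.cast_zero, mul_zero, ite_self]
      split_ifs with h
      · subst h
        simp [hs]
      · simp
    · have hsum : Finsupp.single i 1 + (s - Finsupp.single i 1) = s := by
        ext j
        simp only [Finsupp.add_apply, Finsupp.tsub_apply, Finsupp.single_apply]
        split_ifs with h
        · subst h
          omega
        · omega
      rw [hsum]
      split_ifs with h
      · subst h
        ring
      · simp

/-- The abelian subalgebra H_n = ⊕ K·(x_i ∂_i) of D_n = Der_K(P_n) equals its own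
centralizer in D_n; in particular it is a maximal abelian Lie subalgebra. -/
theorem cartan_eq_centralizer (n : ℕ) (K : Type*) [Field K] [CharZero K]
    (Hn : Submodule K (Derivation K (MvPolynomial (Fin n) K) (MvPolynomial (Fin n) K)))
    (hHn : Hn = Submodule.span K {d | ∃ i : Fin n, d = (X i : MvPolynomial (Fin n) K) • pderiv i}) :
    {d : Derivation K (MvPolynomial (Fin n) K) (MvPolynomial (Fin n) K) |
        ∀ h ∈ Hn, ⁅d, h⁆ = 0} = (Hn : Set _) ∧
    ∀ A : Submodule K (Derivation K (MvPolynomial (Fin n) K) (MvPolynomial (Fin n) K)),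
      Hn ≤ A → (∀ x ∈ A, ∀ y ∈ A, ⁅x, y⁆ = 0) → A = Hn := by
  set P := MvPolynomial (Fin n) K
  have happly : ∀ (i : Fin n) (p : P),
      ((X i : P) • pderiv i : Derivation K P P) p = X i * pderiv i p := by
    intro i p
    rw [Derivation.smul_apply, smul_eq_mul]
  -- generators pairwise commute
  have hXp : ∀ (i k : Fin n),
      ((X i : P) • pderiv i : Derivation K P P) (X k) = if i = k then X k else 0 := by
    intro i k
    rw [happly]
    rcases eq_or_ne i k with rfl | h
    · rw [pderiv_X_self, mul_one, if_pos rfl]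
    · rw [pderiv_X_of_ne (Ne.symm h), mul_zero, if_neg h]
  have hgen : ∀ i j : Fin n,
      ⁅((X i : P) • pderiv i : Derivation K P P), ((X j : P) • pderiv j : Derivation K P P)⁆
        = 0 := by
    intro i j
    apply derivation_ext
    intro k
    rw [Derivation.commutator_apply, Derivation.zero_apply, hXp, hXp]
    split_ifs with hjk hik <;> simp [hXp, *]
  have habelian : ∀ x ∈ Hn, ∀ y ∈ Hn, ⁅x, y⁆ = 0 := by
    subst hHn
    intro x hx
    induction hx using Submodule.span_induction with
    | mem x hxg =>
      intro y hy
      induction hy using Submodule.span_induction with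
      | mem y hyg =>
        obtain ⟨i, rfl⟩ := hxg
        obtain ⟨j, rfl⟩ := hyg
        exact hgen i j
      | zero => exact lie_zero x
      | add a b _ _ ha hb => exact (lie_add x a b).trans (by rw [ha, hb, add_zero])
      | smul r a _ ha => exact (lie_smul r x a).trans (by rw [ha, smul_zero])
    | zero => intro y hy; exact zero_lie y
    | add a b _ _ ha hb =>
      intro y hy
      exact (add_lie a b y).trans (by rw [ha y hy, hb y hy, add_zero])
    | smul r a _ ha =>
      intro y hy
      exact (smul_lie r a y).trans (by rw [ha y hy, smul_zero])
  have hmemgen : ∀ i : Fin n, ((X i : P) • pderiv i : Derivation K P P) ∈ Hn := by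
    intro i
    rw [hHn]
    exact Submodule.subset_span ⟨i, rfl⟩
  have h1 : {d : Derivation K P P | ∀ h ∈ Hn, ⁅d, h⁆ = 0} = (Hn : Set _) := by
    apply Set.Subset.antisymm
    · intro d hd
      have heq : ∀ i j : Fin n,
          (X i : P) * pderiv i (d (X j)) = if i = j then d (X j) else 0 := by
        intro i j
        have h0 := hd _ (hmemgen i)
        have h1 := congrArg (fun D : Derivation K P P => D (X j)) h0
        simp only [Derivation.zero_apply] at h1
        rw [Derivation.commutator_apply, happly] at h1
        rcases eq_or_ne i j with rfl | hij
        · rw [if_pos rfl]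
          rw [happly, pderiv_X_self, mul_one] at h1
          exact (sub_eq_zero.mp h1).symm
        · rw [if_neg hij]
          rw [happly, pderiv_X_of_ne (fun h => hij h.symm), mul_zero, map_zero, zero_sub,
            neg_eq_zero] at h1
          exact h1
      set c : Fin n → K := fun j => coeff (Finsupp.single j 1) (d (X j)) with hc
      have hdX : ∀ j : Fin n, d (X j) = C (c j) * X j := by
        intro j
        ext m
        rw [coeff_C_mul, coeff_X']
        by_cases hms : Finsupp.single j 1 = m
        · rw [if_pos hms, mul_one]
          show coeff m (d (X j)) = coeff (Finsupp.single j 1) (d (X j))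
          rw [hms]
        · rw [if_neg hms, mul_zero]
          by_contra hne
          have hmi : ∀ i : Fin n, (m i : K) = if i = j then 1 else 0 := by
            intro i
            have h2 := congrArg (coeff m) (heq i j)
            rw [key_coeff] at h2
            have h3 : coeff m (if i = j then d (X j) else 0)
                = (if i = j then (1 : K) else 0) * coeff m (d (X j)) := by
              split_ifs <;> simp
            rw [h3] at h2
            exact mul_right_cancel₀ hne h2
          apply hms
          ext i
          have hi := hmi i
          rw [Finsupp.single_apply]
          split_ifs at hi ⊢ with h h' h'
          · exact_mod_cast hi.symm
          · exact absurd h.symm h'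
          · exact absurd h'.symm h
          · exact_mod_cast hi.symm
      have hdsum : d = ∑ j : Fin n, c j • ((X j : P) • pderiv j : Derivation K P P) := by
        apply derivation_ext
        intro k
        have hsum_apply : ∀ (s : Finset (Fin n)) (g : Fin n → Derivation K P P) (p : P),
            (∑ j ∈ s, g j) p = ∑ j ∈ s, g j p := by
          intro s g p
          induction s using Finset.induction with
          | empty => rw [Finset.sum_empty, Finset.sum_empty, Derivation.zero_apply]
          | insert _ _ hnot ih =>
            rw [Finset.sum_insert hnot, Finset.sum_insert hnot, Derivation.add_apply, ih]
        rw [hdX k, hsum_apply]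
        rw [Finset.sum_eq_single k]
        · rw [Derivation.smul_apply, happly, pderiv_X_self, mul_one, smul_eq_C_mul]
        · intro b _ hbk
          rw [Derivation.smul_apply, happly, pderiv_X_of_ne (Ne.symm hbk), mul_zero, smul_zero]
        · intro h
          exact absurd (Finset.mem_univ k) h
      rw [hdsum]
      exact Submodule.sum_mem _ fun j _ => Submodule.smul_mem _ _ (hmemgen j)
    · intro d hd h hh
      exact habelian d hd h hh
  refine ⟨h1, ?_⟩
  intro A hle hab
  apply le_antisymm _ hle
  intro d hd
  have hmem : d ∈ {d : Derivation K P P | ∀ h ∈ Hn, ⁅d, h⁆ = 0} :=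
    fun h hh => hab d hd h (hle hh)
  rw [h1] at hmem
  exact hmem
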